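/- If M is a Manin matrix over a noncommutative unital ring and M is invertible (two-sided inverse exists), and det^col(M) is invertible, then M^{-1} is again a Manin matrix. -/

import Mathlib

/-- The column determinant of a square matrix over a noncommutative ring. -/
def detCol {R : Type*} [Ring R] {n : ℕ} (M : Matrix (Fin n) (Fin n) R) : R :=
  ∑ σ : Equiv.Perm (Fin n),
    (Equiv.Perm.sign σ : ℤ) • (List.ofFn fun t => M (σ t) t).prod

/-- A (column) Manin matrix: entries in the same column commute, and cross-commutators of
any 2×2 submatrix agree. -/
def IsManin {R : Type*} [Ring R] {I J : Type*} (M : Matrix I J R) : Prop :=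
  (∀ i k j, Commute (M i j) (M k j)) ∧
  ∀ i j k l, M i j * M k l - M k l * M i j = M k j * M i l - M i l * M k j
namespace ManinAux
variable {R : Type*} [Ring R] {n : ℕ}

abbrev Lam (R : Type*) [Ring R] (n : ℕ) : Type _ :=
  Matrix (Finset (Fin n)) (Finset (Fin n)) R

/-- creation operator -/
def psi (R : Type*) [Ring R] {n : ℕ} (i : Fin n) : Lam R n :=
  Matrix.of fun T S =>
    if i ∉ S ∧ insert i S = T then ((((-1 : ℤ) ^ ((S.filter (fun j => j < i)).card) : ℤ) : R)) else 0

noncomputable def iota (R : Type*) [Ring R] (n : ℕ) : R →+* Lam R n :=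
  Matrix.scalar _

lemma psi_mul_iota (i : Fin n) (r : R) :
    psi R i * iota R n r = iota R n r * psi R i := by
  ext T S
  simp only [iota, Matrix.scalar_apply, Matrix.mul_diagonal, Matrix.diagonal_mul, psi,
    Matrix.of_apply]
  split
  · exact (Int.cast_commute _ r).eq
  · simp

lemma psi_mul_apply (i j : Fin n) (T S : Finset (Fin n)) :
    (psi R i * psi R j) T S =
      if j ∉ S ∧ i ∉ insert j S ∧ insert i (insert j S) = T then
        ((((-1 : ℤ) ^ (((insert j S).filter (fun t => t < i)).card + (S.filter (fun t => t < j)).card) : ℤ) : R))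
      else 0 := by
  rw [Matrix.mul_apply]
  have : ∀ U, psi R i T U * psi R j U S =
      if insert j S = U then
        (if j ∉ S ∧ i ∉ U ∧ insert i U = T then
          ((((-1 : ℤ) ^ (((U).filter (fun t => t < i)).card + (S.filter (fun t => t < j)).card) : ℤ) : R)) else 0)
      else 0 := by
    intro U
    simp only [psi, Matrix.of_apply]
    by_cases h2 : j ∉ S ∧ insert j S = U
    · rw [if_pos h2, if_pos h2.2]
      by_cases h1 : i ∉ U ∧ insert i U = T
      · rw [if_pos h1, if_pos ⟨h2.1, h1.1, h1.2⟩, pow_add, Int.cast_mul]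
      · rw [if_neg h1, zero_mul, if_neg (fun h => h1 ⟨h.2.1, h.2.2⟩)]
    · rw [if_neg h2, mul_zero]
      by_cases hU : insert j S = U
      · rw [if_pos hU, if_neg (fun h => h2 ⟨h.1, hU⟩)]
      · rw [if_neg hU]
  rw [Finset.sum_congr rfl fun U _ => this U, Finset.sum_ite_eq]
  simp only [Finset.mem_univ, if_true]

end ManinAux
namespace ManinAux
variable {R : Type*} [Ring R] {n : ℕ}

lemma psi_sq (i : Fin n) : psi R i * psi R i = (0 : Lam R n) := by
  ext T S
  rw [psi_mul_apply]
  have : ¬ (i ∉ S ∧ i ∉ insert i S ∧ insert i (insert i S) = T) := by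
    rintro ⟨-, h, -⟩; exact h (Finset.mem_insert_self i S)
  rw [if_neg this]; rfl

lemma parity (i j : Fin n) (S : Finset (Fin n)) (hij : i ≠ j) (hi : i ∉ S) (hj : j ∉ S) :
    ((-1:ℤ) ^ (((insert j S).filter (fun t => t < i)).card + (S.filter (fun t => t < j)).card))
    = -((-1:ℤ) ^ (((insert i S).filter (fun t => t < j)).card + (S.filter (fun t => t < i)).card)) := by
  have h1 : ((insert j S).filter (fun t => t < i)).card
      = (if j < i then 1 else 0) + (S.filter (fun t => t < i)).card := by
    rw [Finset.filter_insert]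
    split
    · rw [Finset.card_insert_of_notMem (fun h => hj (Finset.mem_filter.1 h).1)]; omega
    · simp
  have h2 : ((insert i S).filter (fun t => t < j)).card
      = (if i < j then 1 else 0) + (S.filter (fun t => t < j)).card := by
    rw [Finset.filter_insert]
    split
    · rw [Finset.card_insert_of_notMem (fun h => hi (Finset.mem_filter.1 h).1)]; omega
    · simp
  rcases lt_or_gt_of_ne hij with h | h
  · rw [h1, h2, if_neg (asymm h), if_pos h]
    ring
  · rw [h1, h2, if_pos h, if_neg (asymm h)]
    ring

lemma psi_anticomm (i j : Fin n) : psi R i * psi R j = -(psi R j * psi R i) := by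
  by_cases hij : i = j
  · subst hij; rw [psi_sq, neg_zero]
  · ext T S
    rw [Matrix.neg_apply, psi_mul_apply, psi_mul_apply]
    by_cases h : j ∉ S ∧ i ∉ insert j S ∧ insert i (insert j S) = T
    · have hiS : i ∉ S := fun hx => h.2.1 (Finset.mem_insert_of_mem hx)
      have hji : j ∉ insert i S := by
        simp only [Finset.mem_insert]
        rintro (rfl | hx)
        · exact hij rfl
        · exact h.1 hx
      have hT : insert j (insert i S) = T := by rw [Finset.insert_comm]; exact h.2.2
      rw [if_pos h, if_pos ⟨hiS, hji, hT⟩, parity i j S hij hiS h.1]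
      push_cast
      ring
    · rw [if_neg h, if_neg]
      · rw [neg_zero]
      · rintro ⟨hiS, hjiS, hT⟩
        have hjS : j ∉ S := fun hx => hjiS (Finset.mem_insert_of_mem hx)
        have hij' : i ∉ insert j S := by
          simp only [Finset.mem_insert]
          rintro (rfl | hx)
          · exact hij rfl
          · exact hiS hx
        exact h ⟨hjS, hij', by rw [Finset.insert_comm]; exact hT⟩

end ManinAux
namespace ManinAux

section Lists
variable {A : Type*} [Ring A] {ι : Type*} {g : ι → A}
  (hAC : ∀ i j, g i * g j = -(g j * g i)) (hSQ : ∀ i, g i * g i = 0)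

include hAC in
lemma move_lemma : ∀ (l : List ι) (x : ι),
    (l.map g).prod * g x = ((-1:ℤ) ^ l.length) • (g x * (l.map g).prod) := by
  intro l
  induction l with
  | nil => simp
  | cons a t ih =>
    intro x
    simp only [List.map_cons, List.prod_cons, List.length_cons, mul_assoc, ih x]
    rw [mul_smul_comm, ← mul_assoc, hAC a x, pow_succ]
    simp [smul_smul, mul_smul_comm, mul_assoc]

include hAC hSQ in
lemma prod_mul_self_mem : ∀ (l : List ι) (x : ι), x ∈ l → (l.map g).prod * g x = 0 := by
  intro l
  induction l with
  | nil => simp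
  | cons a t ih =>
    intro x hx
    rcases List.mem_cons.1 hx with rfl | hx
    · simp only [List.map_cons, List.prod_cons, mul_assoc, move_lemma hAC t x]
      rw [mul_smul_comm, ← mul_assoc, hSQ x, zero_mul, smul_zero]
    · simp only [List.map_cons, List.prod_cons, mul_assoc, ih x hx, mul_zero]

include hAC hSQ in
lemma self_mul_prod_mem : ∀ (l : List ι) (x : ι), x ∈ l → g x * (l.map g).prod = 0 := by
  intro l
  induction l with
  | nil => simp
  | cons a t ih =>
    intro x hx
    rcases List.mem_cons.1 hx with rfl | hx
    · simp only [List.map_cons, List.prod_cons, ← mul_assoc, hSQ x, zero_mul]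
    · simp only [List.map_cons, List.prod_cons, ← mul_assoc, hAC x a]
      rw [neg_mul, mul_assoc, ih x hx, mul_zero, neg_zero]

include hAC hSQ in
lemma ofFn_prod_eq_zero : ∀ {m : ℕ} (v : Fin m → ι) (p q : Fin m), p ≠ q →
    g (v p) = g (v q) → (List.ofFn (fun t => g (v t))).prod = 0 := by
  intro m
  induction m with
  | zero => exact fun v p q h _ => absurd (Subsingleton.elim p q) h
  | succ m ih =>
    intro v p q hpq hv
    rw [List.ofFn_succ, List.prod_cons]
    by_cases hp : p = 0
    · subst hp
      have hq : q ≠ 0 := fun h => hpq h.symm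
      rw [hv, List.ofFn_eq_map]
      have hmm : (List.map (fun i : Fin m => g (v i.succ)) (List.finRange m))
          = List.map g (List.map (fun t : Fin m => v t.succ) (List.finRange m)) := by
        rw [List.map_map]; rfl
      rw [hmm]
      refine self_mul_prod_mem hAC hSQ _ (v q) ?_
      rw [List.mem_map]
      exact ⟨q.pred hq, List.mem_finRange _, by simp⟩
    · by_cases hq : q = 0
      · subst hq
        rw [← hv, List.ofFn_eq_map]
        have hmm : (List.map (fun i : Fin m => g (v i.succ)) (List.finRange m))
            = List.map g (List.map (fun t : Fin m => v t.succ) (List.finRange m)) := by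
          rw [List.map_map]; rfl
        rw [hmm]
        refine self_mul_prod_mem hAC hSQ _ (v p) ?_
        rw [List.mem_map]
        exact ⟨p.pred hp, List.mem_finRange _, by simp⟩
      · have : (List.ofFn (fun t : Fin m => g (v t.succ))).prod = 0 := by
          have := ih (fun t => v t.succ) (p.pred hp) (q.pred hq)
            (fun h => hpq (by rwa [← Fin.pred_inj (ha := hp) (hb := hq)]))
            (by simp [Fin.succ_pred, hv])
          simpa using this
        rw [this, mul_zero]

end Lists
end ManinAux
namespace ManinAux

section Lists2
variable {A : Type*} [Ring A] {ι : Type*} {g : ι → A}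
  (hAC : ∀ i j, g i * g j = -(g j * g i))

include hAC in
lemma perm_prod_sign {l l' : List ι} (h : l.Perm l') :
    ∃ ε : ℤˣ, (l.map g).prod = ((ε : ℤ)) • (l'.map g).prod := by
  induction h with
  | nil => exact ⟨1, by simp⟩
  | cons a h ih =>
    obtain ⟨ε, hε⟩ := ih
    exact ⟨ε, by simp only [List.map_cons, List.prod_cons, hε, mul_smul_comm]⟩
  | swap x y l =>
    refine ⟨-1, ?_⟩
    simp only [List.map_cons, List.prod_cons, ← mul_assoc, hAC y x]
    simp
  | trans h1 h2 ih1 ih2 =>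
    obtain ⟨ε1, h1'⟩ := ih1
    obtain ⟨ε2, h2'⟩ := ih2
    exact ⟨ε1 * ε2, by rw [h1', h2', smul_smul]; push_cast; ring_nf⟩

end Lists2
end ManinAux
namespace ManinAux
variable {R : Type*} [Ring R] {n : ℕ}

lemma sum_anti_iota (c : Fin n → Fin n → R) (hc : ∀ i k, c i k = c k i) :
    ∑ p : Fin n × Fin n, (psi R p.1 * psi R p.2) * iota R n (c p.1 p.2) = 0 := by
  refine Finset.sum_involution (fun p _ => (p.2, p.1)) ?_ ?_ (fun p _ => Finset.mem_univ _)
    (fun p _ => rfl)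
  · intro p _
    simp only
    rw [psi_anticomm p.2 p.1, hc p.2 p.1, neg_mul, add_neg_cancel]
  · intro p _ hne heq
    apply hne
    have h2 : p.2 = p.1 := congrArg Prod.fst heq
    rw [h2, psi_sq, zero_mul]

lemma sum_anti_smul (c : Fin n → Fin n → ℤ) (hc : ∀ i k, c i k = c k i) :
    ∑ p : Fin n × Fin n, c p.1 p.2 • (psi R p.1 * psi R p.2) = 0 := by
  refine Finset.sum_involution (fun p _ => (p.2, p.1)) ?_ ?_ (fun p _ => Finset.mem_univ _)
    (fun p _ => rfl)
  · intro p _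
    simp only
    rw [psi_anticomm p.2 p.1, hc p.2 p.1, smul_neg, add_neg_cancel]
  · intro p _ hne heq
    apply hne
    have h2 : p.2 = p.1 := congrArg Prod.fst heq
    rw [h2, psi_sq, smul_zero]

end ManinAux
namespace ManinAux
variable {R : Type*} [Ring R] {n : ℕ}

/-- ℤ-linear combination of the `psi`s. -/
def phi (R : Type*) [Ring R] (n : ℕ) : (Fin n → ℤ) →ₗ[ℤ] Lam R n where
  toFun v := ∑ i, v i • psi R i
  map_add' u w := by simp [add_smul, Finset.sum_add_distrib]
  map_smul' z v := by simp [mul_smul, Finset.smul_sum]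

lemma phi_mul_phi (u w : Fin n → ℤ) :
    phi R n u * phi R n w = ∑ p : Fin n × Fin n, (u p.1 * w p.2) • (psi R p.1 * psi R p.2) := by
  simp only [phi, LinearMap.coe_mk, AddHom.coe_mk, Finset.sum_mul, Finset.mul_sum,
    Finset.smul_sum, smul_mul_assoc, mul_smul_comm, smul_smul, Fintype.sum_prod_type]
  rw [Finset.sum_comm]
  refine Finset.sum_congr rfl fun i _ => Finset.sum_congr rfl fun k _ => ?_
  rw [mul_comm]

lemma phi_anticomm (u w : Fin n → ℤ) : phi R n u * phi R n w = -(phi R n w * phi R n u) := by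
  rw [← add_eq_zero_iff_eq_neg, phi_mul_phi, phi_mul_phi, ← Finset.sum_add_distrib]
  have : ∀ p : Fin n × Fin n,
      (u p.1 * w p.2) • (psi R p.1 * psi R p.2) + (w p.1 * u p.2) • (psi R p.1 * psi R p.2)
      = (u p.1 * w p.2 + w p.1 * u p.2) • (psi R p.1 * psi R p.2) := by
    intro p; rw [add_smul]
  rw [Finset.sum_congr rfl fun p _ => this p]
  exact sum_anti_smul (R := R) (fun i k => u i * w k + w i * u k) (fun i k => by ring)

lemma phi_sq (u : Fin n → ℤ) : phi R n u * phi R n u = 0 := by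
  rw [phi_mul_phi]
  exact sum_anti_smul (R := R) (fun i k => u i * u k) (fun i k => by ring)

lemma phi_single (t : Fin n) : phi R n (Pi.single t 1) = psi R t := by
  simp only [phi, LinearMap.coe_mk, AddHom.coe_mk]
  rw [Finset.sum_eq_single t]
  · simp
  · intro i _ hit
    rw [Pi.single_apply, if_neg hit, zero_smul]
  · simp

/-- The multilinear “wedge product” map. -/
noncomputable def DD (R : Type*) [Ring R] (n : ℕ) :
    (Fin n → ℤ) [⋀^Fin n]→ₗ[ℤ] Lam R n where
  toMultilinearMap := (MultilinearMap.mkPiAlgebraFin ℤ n (Lam R n)).compLinearMap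
    (fun _ => phi R n)
  map_eq_zero_of_eq' v p q hv hpq := by
    show ((MultilinearMap.mkPiAlgebraFin ℤ n (Lam R n)).compLinearMap (fun _ => phi R n)) v = 0
    rw [MultilinearMap.compLinearMap_apply, MultilinearMap.mkPiAlgebraFin_apply]
    exact ofFn_prod_eq_zero phi_anticomm phi_sq v p q hpq (by rw [hv])

lemma DD_apply (v : Fin n → (Fin n → ℤ)) :
    DD R n v = (List.ofFn fun t => phi R n (v t)).prod := rfl

/-- Reordering a product of distinct `psi`s by a permutation picks up the sign. -/
lemma psi_prod_perm (σ : Equiv.Perm (Fin n)) :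
    (List.ofFn fun t => psi R (σ t)).prod
      = ((Equiv.Perm.sign σ : ℤ)) • (List.ofFn fun t => psi R t).prod := by
  have h := (DD R n).map_perm (fun t => (Pi.single t 1 : Fin n → ℤ)) σ
  rw [DD_apply, DD_apply] at h
  have e1 : (List.ofFn fun t => phi R n (((fun s : Fin n => (Pi.single s 1 : Fin n → ℤ)) ∘ σ) t))
      = (List.ofFn fun t => psi R (σ t)) := by
    congr 1
    funext t
    exact phi_single (σ t)
  have e2 : (List.ofFn fun t : Fin n => phi R n (Pi.single t 1 : Fin n → ℤ))
      = (List.ofFn fun t : Fin n => psi R t) := by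
    congr 1
    funext t
    exact phi_single t
  rw [e1, e2] at h
  simpa [Units.smul_def] using h

end ManinAux
namespace ManinAux
variable {R : Type*} [Ring R] {n : ℕ}

lemma prod_psi_iota (l : List (Fin n)) (r : R) :
    (l.map (psi R)).prod * iota R n r = iota R n r * (l.map (psi R)).prod := by
  induction l with
  | nil => simp
  | cons a t ih =>
    simp only [List.map_cons, List.prod_cons, mul_assoc, ih]
    rw [← mul_assoc, ← mul_assoc, psi_mul_iota]

lemma sorted_prod_entry : ∀ (l : List (Fin n)), l.Pairwise (· < ·) → ∀ T,
    ((l.map (psi R)).prod) T ∅ = if T = l.toFinset then 1 else 0 := by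
  intro l
  induction l with
  | nil =>
    intro _ T
    simp only [List.map_nil, List.prod_nil, List.toFinset_nil]
    rw [Matrix.one_apply]
    congr
  | cons x t ih =>
    intro hs T
    have hst : t.Pairwise (· < ·) := hs.of_cons
    have hxt : ∀ y ∈ t, x < y := fun y hy => List.rel_of_pairwise_cons hs hy
    simp only [List.map_cons, List.prod_cons]
    rw [Matrix.mul_apply]
    have : ∀ U, psi R x T U * ((t.map (psi R)).prod) U ∅
        = if t.toFinset = U then psi R x T t.toFinset else 0 := by
      intro U
      rw [ih hst U]
      by_cases hU : U = t.toFinset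
      · rw [if_pos hU, if_pos hU.symm, mul_one, hU]
      · rw [if_neg hU, if_neg (fun h => hU h.symm), mul_zero]
    rw [Finset.sum_congr rfl fun U _ => this U, Finset.sum_ite_eq]
    simp only [Finset.mem_univ, if_true]
    have hxnot : x ∉ t.toFinset := by
      intro hx
      exact absurd rfl (ne_of_lt (hxt x (List.mem_toFinset.1 hx)))
    have hfil : t.toFinset.filter (fun j => j < x) = ∅ := by
      refine Finset.filter_eq_empty_iff.2 ?_
      intro y hy
      exact asymm (hxt y (List.mem_toFinset.1 hy))
    simp only [psi, Matrix.of_apply, hxnot, not_false_iff, true_and, hfil,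
      Finset.card_empty, pow_zero, List.toFinset_cons]
    by_cases hT : insert x t.toFinset = T
    · rw [if_pos hT, if_pos hT.symm]; norm_num
    · rw [if_neg hT, if_neg (fun h => hT h.symm)]

lemma prod_ofFn_sum : ∀ {m : ℕ} (F : Fin m → Fin n → Lam R n),
    (List.ofFn fun t => ∑ i, F t i).prod
      = ∑ f : Fin m → Fin n, (List.ofFn fun t => F t (f t)).prod := by
  intro m
  induction m with
  | zero => intro F; simp
  | succ m ih =>
    intro F
    rw [List.ofFn_succ, List.prod_cons, ih (fun t i => F t.succ i), Finset.mul_sum]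
    rw [← (Fin.consEquiv (fun _ : Fin (m+1) => Fin n)).sum_comp
      (fun f => (List.ofFn fun t => F t (f t)).prod), Fintype.sum_prod_type]
    have hR : ∀ (x : Fin n) (y : Fin m → Fin n),
        (List.ofFn fun t => F t ((Fin.consEquiv (fun _ : Fin (m+1) => Fin n)) (x, y) t)).prod
        = F 0 x * (List.ofFn fun t => F t.succ (y t)).prod := by
      intro x y
      rw [List.ofFn_succ, List.prod_cons]
      simp [Fin.consEquiv]
    rw [Finset.sum_congr rfl fun x _ => Finset.sum_congr rfl fun y _ => hR x y]
    rw [Finset.sum_comm]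
    refine Finset.sum_congr rfl fun y _ => ?_
    rw [Finset.sum_mul]

end ManinAux
namespace ManinAux
variable {R : Type*} [Ring R] {n : ℕ}

lemma pull : ∀ {m : ℕ} (f : Fin m → Fin n) (c : Fin m → R),
    (List.ofFn fun t => psi R (f t) * iota R n (c t)).prod
      = (List.ofFn fun t => psi R (f t)).prod * iota R n (List.ofFn c).prod := by
  intro m
  induction m with
  | zero => intro f c; simp
  | succ m ih =>
    intro f c
    rw [List.ofFn_succ, List.prod_cons, ih (fun t => f t.succ) (fun t => c t.succ),
      List.ofFn_succ (f := fun t => psi R (f t)), List.prod_cons,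
      List.ofFn_succ (f := c), List.prod_cons]
    have hmm : (List.ofFn fun t : Fin m => psi R (f t.succ))
        = List.map (psi R) (List.map (fun t : Fin m => f t.succ) (List.finRange m)) := by
      rw [List.map_map, List.ofFn_eq_map]; rfl
    rw [hmm, mul_assoc, ← mul_assoc (iota R n (c 0)), ← prod_psi_iota, map_mul]
    simp only [mul_assoc]

lemma psi_ofFn_prod_zero {m : ℕ} (f : Fin m → Fin n) (hf : ¬ Function.Injective f) :
    (List.ofFn fun t => psi R (f t)).prod = 0 := by
  obtain ⟨p, q, hfeq, hpq⟩ := Function.not_injective_iff.1 hf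
  exact ofFn_prod_eq_zero psi_anticomm psi_sq f p q hpq (congrArg (psi R) hfeq)

lemma psit_prod_eq (M : Matrix (Fin n) (Fin n) R) :
    (List.ofFn fun t => ∑ i, psi R i * iota R n (M i t)).prod
      = (List.ofFn fun t : Fin n => psi R t).prod * iota R n (detCol M) := by
  classical
  rw [prod_ofFn_sum (fun t i => psi R i * iota R n (M i t))]
  rw [Finset.sum_congr rfl fun f _ => pull f (fun t => M (f t) t)]
  rw [← Finset.sum_filter_of_ne
    (p := fun f : Fin n → Fin n => Function.Injective f) (fun f _ hne => by
      by_contra hinj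
      exact hne (by rw [psi_ofFn_prod_zero f hinj, zero_mul]))]
  have h2 : ∑ f ∈ Finset.univ.filter (fun f : Fin n → Fin n => Function.Injective f),
        (List.ofFn fun t => psi R (f t)).prod * iota R n (List.ofFn fun t => M (f t) t).prod
      = ∑ σ : Equiv.Perm (Fin n),
        (List.ofFn fun t => psi R (σ t)).prod * iota R n (List.ofFn fun t => M (σ t) t).prod := by
    refine (Finset.sum_bij (fun (σ : Equiv.Perm (Fin n)) _ => (σ : Fin n → Fin n)) ?_ ?_ ?_ ?_).symm
    · exact fun σ _ => Finset.mem_filter.2 ⟨Finset.mem_univ _, σ.injective⟩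
    · exact fun σ1 _ σ2 _ h => Equiv.coe_fn_injective h
    · intro f hf
      have hbij := Finite.injective_iff_bijective.1 (Finset.mem_filter.1 hf).2
      exact ⟨Equiv.ofBijective f hbij, Finset.mem_univ _, rfl⟩
    · exact fun σ _ => rfl
  rw [h2]
  have h3 : ∀ σ : Equiv.Perm (Fin n),
      (List.ofFn fun t => psi R (σ t)).prod * iota R n (List.ofFn fun t => M (σ t) t).prod
      = (List.ofFn fun t : Fin n => psi R t).prod
        * iota R n ((Equiv.Perm.sign σ : ℤ) • (List.ofFn fun t => M (σ t) t).prod) := by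
    intro σ
    rw [psi_prod_perm, smul_mul_assoc, map_zsmul, mul_smul_comm]
  rw [Finset.sum_congr rfl fun σ _ => h3 σ, ← Finset.mul_sum, ← map_sum]
  rfl

end ManinAux
namespace ManinAux
variable {R : Type*} [Ring R] {n : ℕ}

set_option maxHeartbeats 1000000 in
/-- the row of Grassmann variables multiplied by the matrix `M` -/
noncomputable def psit (M : Matrix (Fin n) (Fin n) R) (j : Fin n) : Lam R n :=
  ∑ i, psi R i * iota R n (M i j)

variable (M N : Matrix (Fin n) (Fin n) R)

lemma psit_mul (j l : Fin n) : psit M j * psit M l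
    = ∑ p : Fin n × Fin n, (psi R p.1 * psi R p.2) * iota R n (M p.1 j * M p.2 l) := by
  rw [psit, psit, Finset.sum_mul, Fintype.sum_prod_type]
  refine Finset.sum_congr rfl fun i _ => ?_
  rw [Finset.mul_sum]
  refine Finset.sum_congr rfl fun k _ => ?_
  rw [mul_assoc, ← mul_assoc (iota R n (M i j)), ← psi_mul_iota, mul_assoc, ← map_mul,
    ← mul_assoc]

variable (hM1 : ∀ i k j, Commute (M i j) (M k j))
  (hM2 : ∀ i j k l, M i j * M k l - M k l * M i j = M k j * M i l - M i l * M k j)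

include hM2 in
lemma psit_anticomm (j l : Fin n) : psit M j * psit M l = -(psit M l * psit M j) := by
  refine eq_neg_of_add_eq_zero_left ?_
  have hc : ∀ p : Fin n × Fin n,
      (psi R p.1 * psi R p.2) * iota R n (M p.1 j * M p.2 l)
        + (psi R p.1 * psi R p.2) * iota R n (M p.1 l * M p.2 j)
      = (psi R p.1 * psi R p.2) * iota R n (M p.1 j * M p.2 l + M p.1 l * M p.2 j) := by
    intro p; rw [map_add, mul_add]
  have hsym : ∀ i k : Fin n, M i j * M k l + M i l * M k j = M k j * M i l + M k l * M i j := by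
    intro i k
    have h := hM2 i j k l
    have h2 : (M i j * M k l + M i l * M k j) - (M k j * M i l + M k l * M i j)
        = (M i j * M k l - M k l * M i j) - (M k j * M i l - M i l * M k j) := by abel
    rw [← sub_eq_zero, h2, h, sub_self]
  calc psit M j * psit M l + psit M l * psit M j
      = (∑ p : Fin n × Fin n, (psi R p.1 * psi R p.2) * iota R n (M p.1 j * M p.2 l))
        + ∑ p : Fin n × Fin n, (psi R p.1 * psi R p.2) * iota R n (M p.1 l * M p.2 j) :=
        congrArg₂ (· + ·) (psit_mul M j l) (psit_mul M l j)
    _ = ∑ p : Fin n × Fin n,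
          (psi R p.1 * psi R p.2) * iota R n (M p.1 j * M p.2 l + M p.1 l * M p.2 j) :=
        Finset.sum_add_distrib.symm.trans (Finset.sum_congr rfl fun p _ => hc p)
    _ = 0 := sum_anti_iota (fun i k => M i j * M k l + M i l * M k j) hsym

include hM1 in
lemma psit_sq (j : Fin n) : psit M j * psit M j = 0 :=
  (psit_mul M j j).trans
    (sum_anti_iota (fun i k => M i j * M k j) (fun i k => (hM1 i k j).eq))

variable (hMN : M * N = 1)

include hMN in
lemma expand_psi (a : Fin n) : psi R a = ∑ j, psit M j * iota R n (N j a) := by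
  have h1 : ∀ j, psit M j * iota R n (N j a)
      = ∑ k, psi R k * iota R n (M k j * N j a) := by
    intro j
    rw [psit, Finset.sum_mul]
    refine Finset.sum_congr rfl fun k _ => ?_
    rw [mul_assoc, ← map_mul]
  rw [Finset.sum_congr rfl fun j _ => h1 j, Finset.sum_comm]
  have h2 : ∀ k, ∑ j, psi R k * iota R n (M k j * N j a)
      = psi R k * iota R n ((1 : Matrix (Fin n) (Fin n) R) k a) := by
    intro k
    rw [← Finset.mul_sum, ← map_sum, ← hMN, Matrix.mul_apply]
  rw [Finset.sum_congr rfl fun k _ => h2 k, Finset.sum_eq_single a]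
  · rw [Matrix.one_apply_eq, map_one, mul_one]
  · intro k _ hka
    rw [Matrix.one_apply_ne hka, map_zero, mul_zero]
  · simp

end ManinAux
namespace ManinAux
variable {R : Type*} [Ring R] {n : ℕ}

lemma top_entry (r : R) :
    (((List.finRange n).map (psi R)).prod * iota R n r) Finset.univ ∅ = r := by
  have h1 : (((List.finRange n).map (psi R)).prod) Finset.univ ∅ = 1 := by
    rw [sorted_prod_entry (List.finRange n) (List.pairwise_lt_finRange n) Finset.univ,
      List.toFinset_finRange, if_pos rfl]
  have h2 : iota R n r = Matrix.diagonal (fun _ => r) := Matrix.scalar_apply r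
  rw [h2, Matrix.mul_diagonal, h1, one_mul]

lemma sum_split (b d : Fin n) (hbd : b ≠ d) (h : Fin n → Lam R n)
    (hz : ∀ j ∈ (Finset.univ.erase b).erase d, h j = 0) :
    ∑ j, h j = h b + h d := by
  rw [← Finset.add_sum_erase _ h (Finset.mem_univ b),
    ← Finset.add_sum_erase _ h (Finset.mem_erase.2 ⟨hbd.symm, Finset.mem_univ d⟩),
    Finset.sum_eq_zero hz, add_zero]

variable (M N : Matrix (Fin n) (Fin n) R)
  (hM1 : ∀ i k j, Commute (M i j) (M k j))
  (hM2 : ∀ i j k l, M i j * M k l - M k l * M i j = M k j * M i l - M i l * M k j)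
  (hMN : M * N = 1)

include hM1 hM2

lemma prod_psit_zero (l : List (Fin n)) (x : Fin n) (hx : x ∈ l) :
    (l.map (psit M)).prod * psit M x = 0 :=
  prod_mul_self_mem (psit_anticomm M hM2) (psit_sq M hM1) l x hx

include hMN in
lemma step_A (b d : Fin n) (hbd : b ≠ d) (a : Fin n) :
    ((((Finset.univ.erase b).erase d).sort (· ≤ ·)).map (psit M)).prod * psi R a
      = ((((Finset.univ.erase b).erase d).sort (· ≤ ·)).map (psit M)).prod
          * (psit M b * iota R n (N b a))
        + ((((Finset.univ.erase b).erase d).sort (· ≤ ·)).map (psit M)).prod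
          * (psit M d * iota R n (N d a)) := by
  rw [expand_psi M N hMN a, Finset.mul_sum]
  refine sum_split b d hbd _ (fun j hj => ?_)
  rw [← mul_assoc, prod_psit_zero M hM1 hM2 _ j ((Finset.mem_sort _).2 hj), zero_mul]

end ManinAux
namespace ManinAux
variable {R : Type*} [Ring R] {n : ℕ}

lemma shuffle (X Y : Lam R n) (r : R) (c : Fin n) :
    X * (Y * iota R n r) * psi R c = X * Y * psi R c * iota R n r := by
  simp only [mul_assoc]
  rw [← psi_mul_iota]

variable (M N : Matrix (Fin n) (Fin n) R)
  (hM1 : ∀ i k j, Commute (M i j) (M k j))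
  (hM2 : ∀ i j k l, M i j * M k l - M k l * M i j = M k j * M i l - M i l * M k j)
  (hMN : M * N = 1)

include hM1 hM2 hMN

lemma step_C (b d : Fin n) (hbd : b ≠ d) (c : Fin n) :
    ((((Finset.univ.erase b).erase d).sort (· ≤ ·)).map (psit M)).prod * psit M b * psi R c
      = ((((Finset.univ.erase b).erase d).sort (· ≤ ·)).map (psit M)).prod * psit M b
          * psit M d * iota R n (N d c) := by
  have hPb : ((((Finset.univ.erase b).erase d).sort (· ≤ ·)).map (psit M)).prod * psit M b
      = ((((((Finset.univ.erase b).erase d).sort (· ≤ ·)) ++ [b])).map (psit M)).prod := by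
    rw [List.map_append, List.prod_append]
    simp
  rw [expand_psi M N hMN c, Finset.mul_sum]
  have hsplit := sum_split d b hbd.symm
    (fun j => ((((Finset.univ.erase b).erase d).sort (· ≤ ·)).map (psit M)).prod * psit M b
      * (psit M j * iota R n (N j c))) (fun j hj => ?hz)
  case hz =>
    beta_reduce
    have hjb : j ≠ b := (Finset.mem_erase.1 hj).1
    have hjd : j ≠ d := (Finset.mem_erase.1 (Finset.mem_erase.1 hj).2).1
    have hjmem : j ∈ ((((Finset.univ.erase b).erase d).sort (· ≤ ·)) ++ [b]) := by
      rw [List.mem_append]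
      left
      exact (Finset.mem_sort _).2 (Finset.mem_erase.2 ⟨hjd, Finset.mem_erase.2
        ⟨hjb, Finset.mem_univ j⟩⟩)
    rw [← mul_assoc, hPb, prod_psit_zero M hM1 hM2 _ j hjmem, zero_mul]
  rw [hsplit]
  beta_reduce
  have hb0 : ((((Finset.univ.erase b).erase d).sort (· ≤ ·)).map (psit M)).prod * psit M b
      * (psit M b * iota R n (N b c)) = 0 := by
    rw [← mul_assoc, hPb, prod_psit_zero M hM1 hM2 _ b (by simp), zero_mul]
  rw [hb0, add_zero, ← mul_assoc]

lemma step_D (b d : Fin n) (hbd : b ≠ d) (c : Fin n) :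
    ((((Finset.univ.erase b).erase d).sort (· ≤ ·)).map (psit M)).prod * psit M d * psi R c
      = -(((((Finset.univ.erase b).erase d).sort (· ≤ ·)).map (psit M)).prod * psit M b
          * psit M d * iota R n (N b c)) := by
  have h1 : ((((Finset.univ.erase d).erase b).sort (· ≤ ·)).map (psit M)).prod * psit M d * psi R c
      = ((((Finset.univ.erase d).erase b).sort (· ≤ ·)).map (psit M)).prod * psit M d
          * psit M b * iota R n (N b c) := step_C M N hM1 hM2 hMN d b hbd.symm c
  have hee : (Finset.univ.erase d).erase b = (Finset.univ.erase b).erase d := by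
    ext x; simp only [Finset.mem_erase, Finset.mem_univ, and_true]; tauto
  rw [hee] at h1
  rw [h1, mul_assoc _ (psit M d), psit_anticomm M hM2 d b, mul_neg, neg_mul, ← mul_assoc,
    mul_assoc _ (psit M b)]

lemma step_KEY (b d : Fin n) (hbd : b ≠ d) (a c : Fin n) :
    ((((Finset.univ.erase b).erase d).sort (· ≤ ·)).map (psit M)).prod * psi R a * psi R c
      = ((((Finset.univ.erase b).erase d).sort (· ≤ ·)).map (psit M)).prod * psit M b
          * psit M d * iota R n (N d c * N b a - N b c * N d a) := by
  rw [step_A M N hM1 hM2 hMN b d hbd a, add_mul, shuffle, shuffle, step_C M N hM1 hM2 hMN b d hbd c,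
    step_D M N hM1 hM2 hMN b d hbd c, neg_mul, mul_assoc _ _ (iota R n (N b a)),
    mul_assoc _ _ (iota R n (N d a)), ← map_mul, ← map_mul, ← sub_eq_add_neg, ← mul_sub, ← map_sub]

end ManinAux
namespace ManinAux
variable {R : Type*} [Ring R] {n : ℕ}

variable (M N : Matrix (Fin n) (Fin n) R)
  (hM1 : ∀ i k j, Commute (M i j) (M k j))
  (hM2 : ∀ i j k l, M i j * M k l - M k l * M i j = M k j * M i l - M i l * M k j)

include hM1 hM2

lemma extraction (hdet : IsUnit (detCol M)) (b d : Fin n) (hbd : b ≠ d) (x : R)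
    (hx : ((((Finset.univ.erase b).erase d).sort (· ≤ ·)).map (psit M)).prod * psit M b
      * psit M d * iota R n x = 0) : x = 0 := by
  have hlist : ((((Finset.univ.erase b).erase d).sort (· ≤ ·)).map (psit M)).prod * psit M b
      * psit M d
      = ((((((Finset.univ.erase b).erase d).sort (· ≤ ·)) ++ [b, d])).map (psit M)).prod := by
    rw [List.map_append, List.prod_append]
    simp [mul_assoc]
  have hperm : (((((Finset.univ.erase b).erase d).sort (· ≤ ·)) ++ [b, d])).Perm
      (List.finRange n) := by
    refine List.perm_of_nodup_nodup_toFinset_eq ?_ (List.nodup_finRange n) ?_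
    · rw [List.nodup_append]
      refine ⟨Finset.sort_nodup _ _, by simp [hbd], ?_⟩
      intro y hyJ z hybd
      have hy' := (Finset.mem_sort _).1 hyJ
      have hyd : y ≠ d := (Finset.mem_erase.1 hy').1
      have hyb : y ≠ b := (Finset.mem_erase.1 (Finset.mem_erase.1 hy').2).1
      simp only [List.mem_cons, List.not_mem_nil, or_false] at hybd
      rcases hybd with rfl | rfl
      · exact hyb
      · exact hyd
    · ext y
      simp only [List.toFinset_append, Finset.mem_union, List.mem_toFinset,
        Finset.mem_sort, Finset.mem_erase, Finset.mem_univ, and_true,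
        List.toFinset_finRange, List.mem_cons, List.mem_singleton]
      by_cases hyb : y = b
      · simp [hyb]
      · by_cases hyd : y = d
        · simp [hyd]
        · simp [hyb, hyd]
  obtain ⟨ε, hε⟩ := perm_prod_sign (psit_anticomm M hM2) hperm
  have hfr : ((List.finRange n).map (psit M)).prod
      = ((List.finRange n).map (psi R)).prod * iota R n (detCol M) := by
    have h1 : (List.finRange n).map (psit M)
        = List.ofFn fun t => ∑ i, psi R i * iota R n (M i t) := by
      rw [List.ofFn_eq_map]; rfl
    have h2 : (List.ofFn fun t : Fin n => psi R t) = (List.finRange n).map (psi R) := by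
      rw [List.ofFn_eq_map]
    rw [h1, psit_prod_eq, h2]
  rw [hlist, hε, hfr] at hx
  have h0 : ((List.finRange n).map (psi R)).prod * iota R n (detCol M * x) = 0 := by
    have h3 := congrArg (fun z : Lam R n => ((ε⁻¹ : ℤˣ) : ℤ) • z) hx
    simp only [smul_zero] at h3
    rw [smul_mul_assoc, smul_smul] at h3
    rw [Units.inv_mul, one_smul, mul_assoc, ← map_mul] at h3
    exact h3
  have h4 := congrArg (fun Z : Lam R n => Z Finset.univ ∅) h0
  simp only [top_entry, Matrix.zero_apply] at h4
  obtain ⟨u, hu⟩ := hdet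
  calc x = (↑u⁻¹ * ↑u) * x := by rw [Units.inv_mul, one_mul]
    _ = ↑u⁻¹ * (detCol M * x) := by rw [mul_assoc, hu]
    _ = 0 := by rw [h4, mul_zero]

variable (hMN : M * N = 1)
include hMN

lemma key_zero1 (hdet : IsUnit (detCol M)) (b d : Fin n) (hbd : b ≠ d) (a c : Fin n) :
    (N d c * N b a - N b c * N d a) + (N d a * N b c - N b a * N d c) = 0 := by
  refine extraction M hM1 hM2 hdet b d hbd _ ?_
  rw [map_add, mul_add, ← step_KEY M N hM1 hM2 hMN b d hbd a c,
    ← step_KEY M N hM1 hM2 hMN b d hbd c a, mul_assoc, mul_assoc, ← mul_add,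
    psi_anticomm a c, neg_add_cancel, mul_zero]

lemma key_zero2 (hdet : IsUnit (detCol M)) (b d : Fin n) (hbd : b ≠ d) (a : Fin n) :
    N d a * N b a - N b a * N d a = 0 := by
  refine extraction M hM1 hM2 hdet b d hbd _ ?_
  rw [← step_KEY M N hM1 hM2 hMN b d hbd a a, mul_assoc, psi_sq, mul_zero]

end ManinAux
/-- If `M` is a Manin matrix over a noncommutative unital ring which is invertible (a
two-sided inverse matrix `N` exists) and whose column determinant is invertible, then the
inverse matrix `M⁻¹ = N` is again a Manin matrix. -/
theorem manin_inv_isManin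
    {R : Type*} [Ring R] {n : ℕ} (M N : Matrix (Fin n) (Fin n) R)
    (hM : IsManin M) (hMN : M * N = 1) (hNM : N * M = 1)
    (hdet : IsUnit (detCol M)) :
    IsManin N := by
  obtain ⟨hM1, hM2⟩ := hM
  constructor
  · intro i k j
    by_cases hik : i = k
    · rw [hik]
    · have h := ManinAux.key_zero2 M N hM1 hM2 hMN hdet i k hik j
      exact (sub_eq_zero.1 h).symm
  · intro i j k l
    by_cases hik : k = i
    · rw [hik]
    · have h := ManinAux.key_zero1 M N hM1 hM2 hMN hdet k i hik l j
      have h2 : (N i j * N k l - N k l * N i j) - (N k j * N i l - N i l * N k j)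
          = (N i j * N k l - N k j * N i l) + (N i l * N k j - N k l * N i j) := by abel
      rw [← sub_eq_zero, h2, h]
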